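/- arXiv:1312.3437 — 2 statements merged into one kernel-verified Lean document; each statement's English description precedes it below -/
import Mathlib

section
/- (Tits' solution to the word problem, part 1) A word in S* is reduced for the Coxeter system (W,S) (i.e. its free-monoid length equals the Coxeter length of the element it represents) if and only if its length cannot be decreased by any finite sequence of M-operations. -/
/-- The alternating word `[s, r, m] = srsr⋯` of length `m`, starting with `s`. -/
def altWord {S : Type*} (s r : S) : ℕ → List S
  | 0 => []
  | n + 1 => s :: altWord r s n

/-- An `M⁽¹⁾`-operation: delete a subword `ss`. -/
def NilMove {S : Type*} (w w' : List S) : Prop :=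
  ∃ (v u : List S) (s : S), w = v ++ [s, s] ++ u ∧ w' = v ++ u

/-- An `M⁽²⁾`-operation (braid move): replace a subword `[s, r, m_{s,r}]` by
`[r, s, m_{s,r}]`, when `m_{s,r} < ∞` (i.e. `M s r ≠ 0` in Mathlib's convention). -/
def BraidMove {S : Type*} (M : CoxeterMatrix S) (w w' : List S) : Prop :=
  ∃ (v u : List S) (s r : S), M s r ≠ 0 ∧
    w = v ++ altWord s r (M s r) ++ u ∧ w' = v ++ altWord r s (M s r) ++ u

/-- An `M`-operation is either an `M⁽¹⁾`- or an `M⁽²⁾`-operation. -/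
def MMove {S : Type*} (M : CoxeterMatrix S) (w w' : List S) : Prop :=
  NilMove w w' ∨ BraidMove M w w'


/-- A word is `M`-reduced if its length cannot be decreased by any finite sequence of
`M`-operations. -/
def MReduced {S : Type*} (M : CoxeterMatrix S) (w : List S) : Prop :=
  ∀ w' : List S, Relation.ReflTransGen (MMove M) w w' → w.length ≤ w'.length


open List Relation

attribute [local instance] Classical.decEq


namespace TitsAux

variable {S : Type*}

@[simp] theorem altWord_zero (s r : S) : altWord s r 0 = [] := rfl
@[simp] theorem altWord_succ (s r : S) (n : ℕ) : altWord s r (n+1) = s :: altWord r s n := rfl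

@[simp] theorem altWord_length (s r : S) (n : ℕ) : (altWord s r n).length = n := by
  induction n generalizing s r with
  | zero => rfl
  | succ n ih => simp [ih]

theorem altWord_two_step (s r : S) (n : ℕ) : altWord s r (n+2) = s :: r :: altWord s r n := rfl

theorem altWord_append (s r : S) (p q : ℕ) :
    altWord s r (p + q) = altWord s r p ++ (if Even p then altWord s r q else altWord r s q) := by
  induction p generalizing s r with
  | zero => simp
  | succ p ih =>
    have : p + 1 + q = (p + q) + 1 := by omega
    rw [this, altWord_succ, altWord_succ, ih r s]
    simp [Nat.even_add_one]
    by_cases h : Even p <;> simp [h, ← Nat.not_even_iff_odd]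

theorem altWord_getD (s r d : S) (p n : ℕ) (h : p < n) :
    (altWord s r n).getD p d = if Even p then s else r := by
  induction n generalizing s r p with
  | zero => omega
  | succ n ih =>
    rcases p with _ | p
    · simp
    · rw [altWord_succ, getD_cons_succ, ih r s p (by omega)]
      simp [Nat.even_add_one]
      by_cases h : Even p <;> simp [h, ← Nat.not_even_iff_odd]

theorem altWord_eq_reverse_alternatingWord (s r : S) (n : ℕ) :
    altWord s r n = (CoxeterSystem.alternatingWord r s n).reverse := by
  induction n generalizing s r with
  | zero => rfl
  | succ n ih =>
    rw [CoxeterSystem.alternatingWord_succ, altWord_succ, ih r s]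
    simp

end TitsAux

namespace TitsAux

variable {B W : Type*} [Group W] {M : CoxeterMatrix B} (cs : CoxeterSystem M W)

local prefix:100 "σ" => cs.simple
local prefix:100 "π" => cs.wordProd

theorem prod_altWord_even (a b : B) (e : ℕ) :
    π (altWord a b (2*e)) = (σ a * σ b) ^ e := by
  induction e with
  | zero => simp [altWord]
  | succ e ih =>
    have : 2 * (e+1) = (2*e) + 2 := by ring
    rw [this]
    rw [show altWord a b (2*e+2) = a :: b :: altWord a b (2*e) from rfl]
    rw [cs.wordProd_cons, cs.wordProd_cons, ih, pow_succ']
    group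

theorem prod_altWord_odd (a b : B) (e : ℕ) :
    π (altWord a b (2*e+1)) = (σ a * σ b) ^ e * σ a := by
  induction e with
  | zero => simp [altWord]
  | succ e ih =>
    rw [show 2*(e+1)+1 = (2*e+1) + 2 from by ring]
    rw [show altWord a b (2*e+1+2) = a :: b :: altWord a b (2*e+1) from rfl]
    rw [cs.wordProd_cons, cs.wordProd_cons, ih, pow_succ']
    group

theorem pow_simple_comm (a b : B) (k : ℕ) :
    (σ a * σ b) ^ k * σ a = σ a * (σ b * σ a) ^ k := by
  induction k with
  | zero => simp
  | succ k ih =>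
    rw [pow_succ', mul_assoc, ih, pow_succ']
    simp [mul_assoc]

theorem pow_swap_inv (a b : B) (k : ℕ) : (σ b * σ a) ^ k = ((σ a * σ b) ^ k)⁻¹ := by
  rw [← inv_pow, mul_inv_rev, cs.inv_simple, cs.inv_simple]

theorem prod_altWord_braid (s r : B) : π (altWord s r (M s r)) = π (altWord r s (M s r)) := by
  rw [altWord_eq_reverse_alternatingWord, altWord_eq_reverse_alternatingWord,
    cs.wordProd_reverse, cs.wordProd_reverse]
  have h2 := cs.wordProd_braidWord_eq r s
  unfold CoxeterSystem.braidWord at h2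
  rw [M.symmetric r s] at h2
  rw [h2]

/-- `(σa σb)^k = 1` implies relation on alternating words needed later. -/
theorem prod_altWord_eq_of_pow_eq_one (a b : B) (k : ℕ) (h : (σ a * σ b) ^ k = 1) (j : ℕ) :
    π (altWord a b (j + 2 * k)) = π (altWord a b j) := by
  rw [altWord_append]
  have h' : (σ b * σ a) ^ k = 1 := by rw [pow_swap_inv, h, inv_one]
  by_cases hj : Even j <;>
    simp [hj, cs.wordProd_append, prod_altWord_even, h, h']

end TitsAux

namespace TitsAux

variable {B W : Type*} [Group W] {M : CoxeterMatrix B} (cs : CoxeterSystem M W)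

local prefix:100 "σ" => cs.simple
local prefix:100 "π" => cs.wordProd
local prefix:100 "ris" => cs.rightInvSeq

theorem ris_cons (a : B) (ω : List B) :
    ris (a :: ω) = ((π ω)⁻¹ * σ a * π ω) :: ris ω := rfl

private theorem conj_eq_simple_iff (a : B) (w : W) :
    σ a * w * σ a = σ a ↔ w = σ a := by
  constructor
  · intro h
    have := congrArg (fun x => σ a * x * σ a) h
    simpa [mul_assoc, cs.simple_mul_simple_cancel_left,
      cs.simple_mul_simple_self, cs.simple_mul_simple_cancel_right] using this
  · rintro rfl
    simp [cs.simple_mul_simple_cancel_right]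

/-- The sign/permutation representation generator. -/
noncomputable def preEta (a : B) : Equiv.Perm (W × ℤˣ) where
  toFun x := (σ a * x.1 * σ a, if x.1 = σ a then -x.2 else x.2)
  invFun x := (σ a * x.1 * σ a, if x.1 = σ a then -x.2 else x.2)
  left_inv := by
    rintro ⟨w, ε⟩
    simp only [conj_eq_simple_iff]
    by_cases h : w = σ a <;>
      simp [h, mul_assoc, cs.simple_mul_simple_cancel_left, cs.simple_mul_simple_self,
        cs.simple_mul_simple_cancel_right]
  right_inv := by
    rintro ⟨w, ε⟩
    simp only [conj_eq_simple_iff]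
    by_cases h : w = σ a <;>
      simp [h, mul_assoc, cs.simple_mul_simple_cancel_left, cs.simple_mul_simple_self,
        cs.simple_mul_simple_cancel_right]

theorem preEta_apply (a : B) (w : W) (ε : ℤˣ) :
    preEta cs a (w, ε) = (σ a * w * σ a, if w = σ a then -ε else ε) := rfl

/-- Composite of the generators along a word. -/
noncomputable def pword (ω : List B) : Equiv.Perm (W × ℤˣ) := (ω.map (preEta cs)).prod

@[simp] theorem pword_nil : pword cs [] = 1 := rfl

theorem pword_cons (a : B) (ω : List B) :
    pword cs (a :: ω) = preEta cs a * pword cs ω := by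
  simp [pword]

theorem pword_append (ω₁ ω₂ : List B) :
    pword cs (ω₁ ++ ω₂) = pword cs ω₁ * pword cs ω₂ := by
  simp [pword]

theorem pword_apply (ω : List B) (t : W) (ε : ℤˣ) :
    pword cs ω (t, ε) =
      (π ω * t * (π ω)⁻¹, if Odd ((ris ω).count t) then -ε else ε) := by
  induction ω generalizing ε with
  | nil => simp [pword]
  | cons a ω ih =>
    rw [pword_cons, ris_cons, cs.wordProd_cons]
    rw [Equiv.Perm.mul_apply, ih, preEta_apply]
    have hc : π ω * t * (π ω)⁻¹ = σ a ↔ t = (π ω)⁻¹ * σ a * π ω := by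
      constructor
      · intro h
        rw [← h]; group
      · intro h
        rw [h]; group
    rw [List.count_cons]
    by_cases h : t = (π ω)⁻¹ * σ a * π ω
    · have hbeq : ((π ω)⁻¹ * σ a * π ω == t) = true := beq_iff_eq.mpr h.symm
      rw [hbeq]
      simp only [hc, if_pos h, if_true, Prod.mk.injEq]
      refine ⟨by rw [mul_inv_rev, cs.inv_simple]; group, ?_⟩
      rcases Nat.even_or_odd ((ris ω).count t) with he | ho
      · simp [Nat.not_odd_iff_even.mpr he, Nat.odd_add_one, Nat.not_odd_iff_even.mpr he]
      · simp [ho, Nat.odd_add_one, Nat.not_even_iff_odd.mpr ho]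
    · have hbeq : ((π ω)⁻¹ * σ a * π ω == t) = false := by
        rw [beq_eq_false_iff_ne]
        exact fun hh => h hh.symm
      rw [hbeq]
      simp only [hc, if_neg h, Prod.mk.injEq]
      refine ⟨by rw [mul_inv_rev, cs.inv_simple]; group, by simp⟩

end TitsAux

namespace TitsAux

variable {B W : Type*} [Group W] {M : CoxeterMatrix B} (cs : CoxeterSystem M W)

local prefix:100 "σ" => cs.simple
local prefix:100 "π" => cs.wordProd
local prefix:100 "ris" => cs.rightInvSeq

theorem pow_preEta (a b : B) (e : ℕ) :
    (preEta cs a * preEta cs b) ^ e = pword cs (altWord a b (2 * e)) := by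
  induction e with
  | zero => simp
  | succ e ih =>
    rw [show 2 * (e+1) = (2*e) + 2 from by ring,
      show altWord a b (2*e+2) = [a, b] ++ altWord a b (2*e) from rfl,
      pword_append, ← ih, pow_succ']
    congr 1

/-- Entry formula for the right inversion sequence of an alternating word. -/
private def gg (a b : B) (L q : ℕ) : W :=
  if Even L then σ b * (σ a * σ b) ^ (L - q - 1) else σ a * (σ b * σ a) ^ (L - q - 1)

theorem ris_altWord_eq (a b : B) (L : ℕ) :
    ris (altWord a b L) = (List.range L).map (gg cs a b L) := by
  induction L generalizing a b with
  | zero => simp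
  | succ L ih =>
    rw [altWord_succ, ris_cons, ih b a, List.range_succ_eq_map, List.map_cons, List.map_map]
    congr 1
    · -- head computation
      rcases Nat.even_or_odd L with ⟨e, he⟩ | ⟨e, he⟩
      · subst he
        rw [show e + e = 2 * e from by ring, prod_altWord_even]
        have h1 : ((σ b * σ a) ^ e)⁻¹ = (σ a * σ b) ^ e := (pow_swap_inv cs b a e).symm
        rw [h1, gg, if_neg (by simp [Nat.even_add_one])]
        rw [show 2 * e + 1 - 0 - 1 = 2 * e from by omega]
        rw [pow_simple_comm, mul_assoc, ← pow_add]
        congr 2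
        omega
      · subst he
        rw [show 2 * e + 1 = 2*e+1 from rfl, prod_altWord_odd]
        rw [gg, if_pos (by refine ⟨e + 1, by omega⟩)]
        rw [show 2 * e + 1 + 1 - 0 - 1 = 2 * e + 1 from by omega]
        rw [mul_inv_rev, cs.inv_simple, ← pow_swap_inv]
        calc σ b * (σ a * σ b) ^ e * σ a * ((σ b * σ a) ^ e * σ b)
            = σ b * ((σ a * σ b) ^ e * σ a) * ((σ b * σ a) ^ e * σ b) := by
              simp [mul_assoc]
          _ = σ b * (σ a * ((σ b * σ a) ^ e * (σ b * σ a) ^ e)) * σ b := by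
              rw [pow_simple_comm]; simp [mul_assoc]
          _ = σ b * ((σ a * σ b) ^ (2*e) * (σ a * σ b)) := by
              rw [← pow_add, show e + e = 2*e from by ring, ← pow_simple_comm]
              simp [mul_assoc]
          _ = σ b * (σ a * σ b) ^ (2*e+1) := by rw [pow_succ]
    · -- tail
      apply List.map_congr_left
      intro q hq
      simp only [Function.comp]
      rw [gg, gg]
      have harith : L + 1 - (q + 1) - 1 = L - q - 1 := by omega
      rw [harith]
      rcases Nat.even_or_odd L with hL | hL
      · rw [if_pos hL, if_neg (by simpa [Nat.even_add_one] using hL)]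
      · rw [if_neg (by simpa [Nat.even_add_one, Nat.not_even_iff_odd] using hL),
          if_pos (by simpa [Nat.even_add_one, Nat.not_even_iff_odd] using hL)]

theorem count_ris_altWord_even (a b : B) (t : W) :
    Even ((ris (altWord a b (2 * M.M a b))).count t) := by
  have hrel : (σ a * σ b) ^ M.M a b = 1 := cs.simple_mul_simple_pow a b
  rw [ris_altWord_eq, show 2 * M.M a b = M.M a b + M.M a b from by ring, List.range_add,
    List.map_append, List.count_append, List.map_map]
  have h2 : List.map (gg cs a b (M.M a b + M.M a b) ∘ fun x => M.M a b + x)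
      (List.range (M.M a b)) = List.map (gg cs a b (M.M a b + M.M a b))
      (List.range (M.M a b)) := by
    apply List.map_congr_left
    intro q hq
    rw [List.mem_range] at hq
    simp only [Function.comp]
    rw [gg, gg, if_pos ⟨M.M a b, by ring⟩, if_pos ⟨M.M a b, by ring⟩]
    rw [show M.M a b + M.M a b - q - 1 = (M.M a b + M.M a b - (M.M a b + q) - 1) + M.M a b
      from by omega, pow_add, hrel, mul_one]
  rw [h2]
  exact ⟨_, rfl⟩

theorem liftable : M.IsLiftable (fun a => preEta cs a) := by
  intro i i'
  show (preEta cs i * preEta cs i') ^ M.M i i' = 1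
  rw [pow_preEta]
  apply Equiv.ext
  rintro ⟨t, ε⟩
  rw [pword_apply]
  have h1 : π (altWord i i' (2 * M.M i i')) = 1 := by
    rw [show 2 * M.M i i' = 2 * M.M i i' from rfl, prod_altWord_even, cs.simple_mul_simple_pow]
  have h2 : ¬ Odd ((ris (altWord i i' (2 * M.M i i'))).count t) :=
    Nat.not_odd_iff_even.mpr (count_ris_altWord_even cs i i' t)
  simp [h1, h2]

/-- The sign-permutation representation of `W`. -/
noncomputable def eta : W →* Equiv.Perm (W × ℤˣ) := cs.lift ⟨fun a => preEta cs a, liftable cs⟩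

theorem eta_wordProd (ω : List B) : eta cs (π ω) = pword cs ω := by
  induction ω with
  | nil => simp [pword]
  | cons a ω ih =>
    rw [cs.wordProd_cons, map_mul, ih, pword_cons]
    congr 1
    exact cs.lift_apply_simple (liftable cs) a

/-- Parity of the count of `t` in the right inversion sequence only depends on the product. -/
theorem count_parity {ω₁ ω₂ : List B} (h : π ω₁ = π ω₂) (t : W) :
    (Odd ((ris ω₁).count t) ↔ Odd ((ris ω₂).count t)) := by
  have hf : pword cs ω₁ = pword cs ω₂ := by rw [← eta_wordProd, ← eta_wordProd, h]
  have h2 := congrArg (fun p => (p (t, (1 : ℤˣ))).2) hf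
  simp only [pword_apply] at h2
  by_cases hc1 : Odd ((ris ω₁).count t) <;> by_cases hc2 : Odd ((ris ω₂).count t) <;>
      simp only [hc1, hc2, if_true, if_false] at h2 ⊢
  all_goals simp at h2

end TitsAux

namespace TitsAux

variable {B W : Type*} [Group W] {M : CoxeterMatrix B} (cs : CoxeterSystem M W)

local prefix:100 "σ" => cs.simple
local prefix:100 "π" => cs.wordProd
local prefix:100 "ris" => cs.rightInvSeq
local prefix:100 "lis" => cs.leftInvSeq
local prefix:100 "ℓ" => cs.length

theorem lis_eq_reverse (ω : List B) : lis ω = (ris ω.reverse).reverse := by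
  have := cs.leftInvSeq_reverse ω.reverse
  rwa [List.reverse_reverse] at this

theorem count_lis_parity {ω₁ ω₂ : List B} (h : π ω₁ = π ω₂) (t : W) :
    (Odd ((lis ω₁).count t) ↔ Odd ((lis ω₂).count t)) := by
  rw [lis_eq_reverse, lis_eq_reverse, List.count_reverse, List.count_reverse]
  exact count_parity cs (by rw [cs.wordProd_reverse, cs.wordProd_reverse, h]) t

theorem lis_cons (a : B) (ω : List B) :
    lis (a :: ω) = σ a :: List.map (MulAut.conj (σ a)) (lis ω) := rfl

theorem length_simple_mul_of_descent {w : W} {i : B} (h : ℓ (σ i * w) < ℓ w) :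
    ℓ (σ i * w) + 1 = ℓ w := by
  rcases cs.length_simple_mul w i with h1 | h1
  · omega
  · exact h1

theorem mem_lis_of_descent {ω : List B} (hr : cs.IsReduced ω) {i : B}
    (hd : ℓ (σ i * π ω) < ℓ (π ω)) : σ i ∈ lis ω := by
  obtain ⟨ω₀, hω₀red, hω₀⟩ := cs.exists_reduced_word' (σ i * π ω)
  have hπ : π (i :: ω₀) = π ω := by
    rw [cs.wordProd_cons, ← hω₀, ← mul_assoc, cs.simple_mul_simple_self, one_mul]
  have hred : cs.IsReduced (i :: ω₀) := by
    unfold CoxeterSystem.IsReduced at *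
    rw [hπ, List.length_cons, ← hω₀red, ← hω₀]
    rw [hr]
    rw [← hr]
    exact (length_simple_mul_of_descent cs hd).symm
  have hcount1 : (lis (i :: ω₀)).count (σ i) = 1 := by
    have h1 : 0 < (lis (i :: ω₀)).count (σ i) := by
      rw [List.count_pos_iff]
      rw [lis_cons]
      exact List.mem_cons_self
    have h2 : (lis (i :: ω₀)).count (σ i) ≤ 1 :=
      List.nodup_iff_count_le_one.mp (hred.nodup_leftInvSeq) _
    omega
  have hodd : Odd ((lis ω).count (σ i)) := by
    rw [count_lis_parity cs hπ.symm (σ i)]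
    rw [hcount1]
    exact odd_one
  rw [← List.count_pos_iff]
  rcases hodd with ⟨c, hc⟩
  omega

/-- Left exchange property with explicit position. -/
theorem exchange {ω : List B} (hr : cs.IsReduced ω) {i : B}
    (hd : ℓ (σ i * π ω) < ℓ (π ω)) :
    ∃ j, j < ω.length ∧ (lis ω).getD j 1 = σ i ∧ π (ω.eraseIdx j) = σ i * π ω := by
  have hmem := mem_lis_of_descent cs hr hd
  rw [List.mem_iff_getElem] at hmem
  obtain ⟨j, hj, hget⟩ := hmem
  rw [cs.length_leftInvSeq] at hj
  refine ⟨j, hj, ?_, ?_⟩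
  · rw [List.getD_eq_getElem _ _ (by rw [cs.length_leftInvSeq]; exact hj)]
    exact hget
  · rw [← cs.getD_leftInvSeq_mul_wordProd ω j,
      List.getD_eq_getElem _ _ (by rw [cs.length_leftInvSeq]; exact hj), hget]

end TitsAux

namespace TitsAux

open Real

private theorem trigI1 (x θ : ℝ) :
    Real.sin (x + 3*θ) = (4 * Real.cos θ^2 - 1) * Real.sin (x + θ) - 2 * Real.cos θ * Real.sin x := by
  have h1 : x + 3*θ = (x + θ) + 2*θ := by ring
  rw [h1, Real.sin_add, Real.cos_two_mul, Real.sin_two_mul, Real.sin_add, Real.cos_add]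
  linear_combination (-2 * Real.sin x * Real.cos θ) * Real.sin_sq_add_cos_sq θ

private theorem trigI2 (x θ : ℝ) :
    Real.sin (x + 2*θ) = (4 * Real.cos θ^2 - 1) * Real.sin x - 2 * Real.cos θ * Real.sin (x - θ) := by
  rw [Real.sin_add, Real.cos_two_mul, Real.sin_two_mul, Real.sin_sub]
  ring

private theorem trigI3 (x θ : ℝ) :
    Real.sin (x + 2*θ) = 2 * Real.cos θ * Real.sin (x + θ) - Real.sin x := by
  rw [Real.sin_add, Real.cos_two_mul, Real.sin_two_mul, Real.sin_add]
  ring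

private theorem trigI4 (x θ : ℝ) :
    Real.sin (x + θ) = 2 * Real.cos θ * Real.sin x - Real.sin (x - θ) := by
  rw [Real.sin_add, Real.sin_sub]
  ring

section Geom

variable {B : Type*} (M : CoxeterMatrix B)

/-- The standard bilinear form coefficients. -/
noncomputable def kk (a b : B) : ℝ :=
  if M.M a b = 0 then -1 else -Real.cos (Real.pi / M.M a b)

theorem kk_self (a : B) : kk M a a = 1 := by
  rw [kk, if_neg (by rw [M.diagonal]; norm_num), M.diagonal]
  norm_num

theorem kk_symm (a b : B) : kk M a b = kk M b a := by
  rw [kk, kk, M.symmetric a b]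

noncomputable def gphi (a : B) : (B →₀ ℝ) →ₗ[ℝ] ℝ := Finsupp.linearCombination ℝ (kk M a)

noncomputable def grefl (a : B) : Module.End ℝ (B →₀ ℝ) :=
  LinearMap.id - (2:ℝ) • LinearMap.smulRight (gphi M a) (Finsupp.single a 1)

theorem gphi_single (a b : B) : gphi M a (Finsupp.single b 1) = kk M a b := by
  rw [gphi, Finsupp.linearCombination_single, one_smul]

theorem grefl_apply (a : B) (v : B →₀ ℝ) :
    grefl M a v = v - (2 * gphi M a v) • Finsupp.single a 1 := by
  rw [grefl]
  simp [LinearMap.sub_apply, LinearMap.smul_apply, LinearMap.smulRight_apply, smul_smul]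

theorem gphi_grefl (c a : B) (v : B →₀ ℝ) :
    gphi M c (grefl M a v) = gphi M c v - 2 * gphi M a v * kk M c a := by
  rw [grefl_apply, map_sub, map_smul, gphi_single, smul_eq_mul]

theorem grefl_fixed {a : B} {v : B →₀ ℝ} (h : gphi M a v = 0) : grefl M a v = v := by
  rw [grefl_apply, h]
  simp

theorem grefl_invol (a : B) : grefl M a * grefl M a = 1 := by
  apply LinearMap.ext
  intro v
  have h1 : gphi M a (grefl M a v) = - gphi M a v := by
    rw [gphi_grefl, kk_self]; ring
  rw [Module.End.mul_apply, grefl_apply, h1, grefl_apply, Module.End.one_apply]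
  module

theorem grefl_fixed_pow {a b : B} {v : B →₀ ℝ} (ha : gphi M a v = 0) (hb : gphi M b v = 0)
    (n : ℕ) : ((grefl M a * grefl M b) ^ n) v = v := by
  induction n with
  | zero => simp
  | succ n ih =>
    rw [pow_succ', Module.End.mul_apply, ih, Module.End.mul_apply,
      grefl_fixed M hb, grefl_fixed M ha]

theorem grefl_single_other (a b : B) :
    grefl M a (Finsupp.single b 1) =
      Finsupp.single b 1 - (2 * kk M a b) • Finsupp.single a 1 := by
  rw [grefl_apply, gphi_single]

theorem grefl_mul_single_fst (a b : B) :
    (grefl M a * grefl M b) (Finsupp.single a 1) =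
      (4 * kk M a b ^ 2 - 1) • Finsupp.single a (1:ℝ) + (-(2 * kk M a b)) • Finsupp.single b 1 := by
  have h1 : grefl M b (Finsupp.single a 1)
      = Finsupp.single a 1 - (2 * kk M a b) • Finsupp.single b 1 := by
    rw [grefl_single_other, kk_symm M b a]
  rw [Module.End.mul_apply, h1, map_sub, map_smul, grefl_single_other, grefl_single_other,
    kk_self]
  module

theorem grefl_mul_single_snd (a b : B) :
    (grefl M a * grefl M b) (Finsupp.single b 1) =
      (2 * kk M a b) • Finsupp.single a (1:ℝ) + (-1 : ℝ) • Finsupp.single b 1 := by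
  have h1 : grefl M b (Finsupp.single b 1)
      = Finsupp.single b 1 - (2 * (1:ℝ)) • Finsupp.single b 1 := by
    rw [grefl_single_other, kk_self]
  rw [Module.End.mul_apply, h1, map_sub, map_smul, grefl_single_other]
  module

/-- Closed form for powers, infinite-order case. -/
theorem grefl_pow_zero (a b : B) (h0 : M.M a b = 0) (n : ℕ) :
    ((grefl M a * grefl M b) ^ n) (Finsupp.single a 1) =
        (2*(n:ℝ)+1) • Finsupp.single a (1:ℝ) + (2*(n:ℝ)) • Finsupp.single b 1 ∧
      ((grefl M a * grefl M b) ^ n) (Finsupp.single b 1) =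
        (-(2*(n:ℝ))) • Finsupp.single a (1:ℝ) + (-(2*(n:ℝ)-1)) • Finsupp.single b 1 := by
  have hK : kk M a b = -1 := by rw [kk, if_pos h0]
  induction n with
  | zero =>
    norm_num
  | succ n ih =>
    obtain ⟨ihA, ihB⟩ := ih
    constructor
    · rw [pow_succ, Module.End.mul_apply, grefl_mul_single_fst M a b, hK, map_add, map_smul,
        map_smul, ihA, ihB]
      push_cast
      match_scalars <;> ring
    · rw [pow_succ, Module.End.mul_apply, grefl_mul_single_snd M a b, hK, map_add, map_smul,
        map_smul, ihA, ihB]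
      push_cast
      match_scalars <;> ring

/-- Closed form for powers, finite-order case, scaled by `sin θ`. -/
theorem grefl_pow_pos (a b : B) (h0 : M.M a b ≠ 0) (n : ℕ) :
    Real.sin (Real.pi / M.M a b) • ((grefl M a * grefl M b) ^ n) (Finsupp.single a 1) =
        Real.sin (2*(n:ℝ)*(Real.pi / M.M a b) + (Real.pi / M.M a b)) • Finsupp.single a (1:ℝ)
          + Real.sin (2*(n:ℝ)*(Real.pi / M.M a b)) • Finsupp.single b 1 ∧
      Real.sin (Real.pi / M.M a b) • ((grefl M a * grefl M b) ^ n) (Finsupp.single b 1) =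
        (-Real.sin (2*(n:ℝ)*(Real.pi / M.M a b))) • Finsupp.single a (1:ℝ)
          + (-Real.sin (2*(n:ℝ)*(Real.pi / M.M a b) - (Real.pi / M.M a b))) • Finsupp.single b 1 := by
  set θ := Real.pi / M.M a b with hθ
  have hK : kk M a b = -Real.cos θ := by rw [kk, if_neg h0]
  induction n with
  | zero =>
    push_cast
    constructor
    · rw [pow_zero, Module.End.one_apply,
        show 2*(0:ℝ)*θ + θ = θ from by ring, show 2*(0:ℝ)*θ = 0 from by ring, Real.sin_zero]
      module
    · rw [pow_zero, Module.End.one_apply,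
        show 2*(0:ℝ)*θ - θ = -θ from by ring, show 2*(0:ℝ)*θ = 0 from by ring, Real.sin_zero,
        Real.sin_neg]
      module
  | succ n ih =>
    obtain ⟨ihA, ihB⟩ := ih
    have harg1 : 2*((n:ℝ)+1)*θ + θ = (2*(n:ℝ)*θ) + 3*θ := by ring
    have harg2 : 2*((n:ℝ)+1)*θ = (2*(n:ℝ)*θ) + 2*θ := by ring
    have harg3 : 2*((n:ℝ)+1)*θ - θ = (2*(n:ℝ)*θ) + θ := by ring
    constructor
    · rw [pow_succ, Module.End.mul_apply, grefl_mul_single_fst M a b, hK, map_add, map_smul,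
        map_smul, smul_add, smul_comm (Real.sin θ), smul_comm (Real.sin θ), ihA, ihB]
      push_cast
      rw [harg1, harg2]
      match_scalars
      · linear_combination (-1 : ℝ) * trigI1 (2*(n:ℝ)*θ) θ
      · linear_combination (-1 : ℝ) * trigI2 (2*(n:ℝ)*θ) θ
    · rw [pow_succ, Module.End.mul_apply, grefl_mul_single_snd M a b, hK, map_add, map_smul,
        map_smul, smul_add, smul_comm (Real.sin θ), smul_comm (Real.sin θ), ihA, ihB]
      push_cast
      rw [harg3, harg2]
      match_scalars
      · linear_combination trigI3 (2*(n:ℝ)*θ) θ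
      · linear_combination trigI4 (2*(n:ℝ)*θ) θ

theorem grefl_braid (a b : B) : (grefl M a * grefl M b) ^ M.M a b = 1 := by
  rcases eq_or_ne a b with rfl | hab
  · rw [M.diagonal, pow_one]
    exact grefl_invol M a
  rcases eq_or_ne (M.M a b) 0 with h0 | h0
  · rw [h0, pow_zero]
  set θ := Real.pi / M.M a b with hθ
  have hm2 : 2 ≤ M.M a b := by
    have := M.off_diagonal a b hab
    omega
  have hθpos : 0 < θ := div_pos Real.pi_pos (by exact_mod_cast Nat.pos_of_ne_zero h0)
  have hθlt : θ < Real.pi := by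
    rw [hθ]
    apply div_lt_self Real.pi_pos
    exact_mod_cast hm2
  have hs : 0 < Real.sin θ := Real.sin_pos_of_pos_of_lt_pi hθpos hθlt
  have hmθ : (M.M a b : ℝ) * θ = Real.pi := by
    rw [hθ]
    field_simp
  have hsin0 : Real.sin (2*(M.M a b:ℝ)*θ) = 0 := by
    rw [show 2*(M.M a b:ℝ)*θ = 2*Real.pi from by linear_combination 2*hmθ, Real.sin_two_pi]
  have hsin1 : Real.sin (2*(M.M a b:ℝ)*θ + θ) = Real.sin θ := by
    rw [show 2*(M.M a b:ℝ)*θ + θ = θ + 2*Real.pi from by linear_combination 2*hmθ,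
      Real.sin_add_two_pi]
  have hsin2 : Real.sin (2*(M.M a b:ℝ)*θ - θ) = -Real.sin θ := by
    rw [show 2*(M.M a b:ℝ)*θ - θ = 2*Real.pi - θ from by linear_combination 2*hmθ,
      Real.sin_two_pi_sub]
  obtain ⟨hA, hB⟩ := grefl_pow_pos M a b h0 (M.M a b)
  rw [← hθ, hsin0, hsin1] at hA
  rw [← hθ, hsin0, hsin2] at hB
  have hinj : Function.Injective (fun (v : B →₀ ℝ) => Real.sin θ • v) :=
    smul_right_injective _ hs.ne'
  have hA' : ((grefl M a * grefl M b) ^ M.M a b) (Finsupp.single a 1) = Finsupp.single a 1 := by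
    apply hinj
    simp only
    rw [hA]
    module
  have hB' : ((grefl M a * grefl M b) ^ M.M a b) (Finsupp.single b 1) = Finsupp.single b 1 := by
    apply hinj
    simp only
    rw [hB]
    module
  have hD : 1 - Real.cos θ ^ 2 ≠ 0 := by
    have h1 : Real.sin θ ^ 2 = 1 - Real.cos θ ^2 := by
      linear_combination Real.sin_sq_add_cos_sq θ
    rw [← h1]
    positivity
  have hK : kk M a b = -Real.cos θ := by rw [kk, if_neg h0]
  apply LinearMap.ext
  intro v
  set xa := (gphi M a v + Real.cos θ * gphi M b v)/(1 - Real.cos θ^2) with hxa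
  set xb := (gphi M b v + Real.cos θ * gphi M a v)/(1 - Real.cos θ^2) with hxb
  set u := v - xa • Finsupp.single a 1 - xb • Finsupp.single b 1 with hu
  have hba1 : kk M b a = -Real.cos θ := by rw [← kk_symm]; exact hK
  have hua : gphi M a u = 0 := by
    rw [hu, map_sub, map_sub, map_smul, map_smul, gphi_single, gphi_single, kk_self, hK,
      smul_eq_mul, smul_eq_mul, hxa, hxb]
    field_simp
    ring
  have hub : gphi M b u = 0 := by
    rw [hu, map_sub, map_sub, map_smul, map_smul, gphi_single, gphi_single, kk_self, hba1,
      smul_eq_mul, smul_eq_mul, hxa, hxb]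
    field_simp
    ring
  have hv : v = xa • Finsupp.single a 1 + xb • Finsupp.single b 1 + u := by
    rw [hu]
    module
  rw [Module.End.one_apply, hv, map_add, map_add, map_smul, map_smul, hA', hB',
    grefl_fixed_pow M hua hub]

end Geom

end TitsAux

namespace TitsAux

open Real

variable {B W : Type*} [Group W] {M : CoxeterMatrix B} (cs : CoxeterSystem M W)

local prefix:100 "σ" => cs.simple

theorem order_exact {i j : B} (hij : i ≠ j) {k : ℕ} (hk : 0 < k)
    (hpow : (σ i * σ j) ^ k = 1) : M.M i j ≠ 0 ∧ M.M i j ≤ k := by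
  have hlift : M.IsLiftable (fun a => grefl M a) := fun a b => grefl_braid M a b
  have hG : (grefl M i * grefl M j) ^ k = 1 := by
    have h1 := congrArg (cs.lift ⟨fun a => grefl M a, hlift⟩) hpow
    rw [map_pow, map_mul, map_one, cs.lift_apply_simple hlift i,
      cs.lift_apply_simple hlift j] at h1
    exact h1
  rcases eq_or_ne (M.M i j) 0 with h0 | h0
  · exfalso
    have hA := (grefl_pow_zero M i j h0 k).1
    rw [hG, Module.End.one_apply] at hA
    have h2 := congrArg (fun f : B →₀ ℝ => f j) hA
    simp only [Finsupp.add_apply, Finsupp.smul_apply, smul_eq_mul,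
      Finsupp.single_eq_of_ne (Ne.symm hij), Finsupp.single_eq_same, mul_zero, mul_one, zero_add] at h2
    have : (k : ℝ) = 0 := by linarith
    exact_mod_cast absurd this (by positivity)
  · refine ⟨h0, ?_⟩
    set θ := Real.pi / M.M i j with hθdef
    have hm2 : 2 ≤ M.M i j := by
      have := M.off_diagonal i j hij
      omega
    have hθpos : 0 < θ := div_pos Real.pi_pos (by exact_mod_cast Nat.pos_of_ne_zero h0)
    have hθlt : θ < Real.pi := by
      rw [hθdef]
      apply div_lt_self Real.pi_pos
      exact_mod_cast hm2
    have hs : 0 < Real.sin θ := Real.sin_pos_of_pos_of_lt_pi hθpos hθlt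
    have hmθ : (M.M i j : ℝ) * θ = Real.pi := by
      rw [hθdef]
      field_simp
    have hA := (grefl_pow_pos M i j h0 k).1
    rw [hG, Module.End.one_apply, ← hθdef] at hA
    have hzero : Real.sin (2*(k:ℝ)*θ) = 0 := by
      have h2 := congrArg (fun f : B →₀ ℝ => f j) hA
      simp only [Finsupp.add_apply, Finsupp.smul_apply, smul_eq_mul,
        Finsupp.single_eq_of_ne (Ne.symm hij), Finsupp.single_eq_same, mul_zero, mul_one, zero_add] at h2
      linarith
    have hone : Real.sin (2*(k:ℝ)*θ + θ) = Real.sin θ := by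
      have h2 := congrArg (fun f : B →₀ ℝ => f i) hA
      simp only [Finsupp.add_apply, Finsupp.smul_apply, smul_eq_mul,
        Finsupp.single_eq_of_ne hij, Finsupp.single_eq_same, mul_zero, mul_one,
        add_zero] at h2
      linarith
    obtain ⟨N, hN⟩ := Real.sin_eq_zero_iff.mp hzero
    have hcos : Real.cos ((N:ℝ) * Real.pi) * Real.sin θ = Real.sin θ := by
      rw [← hN, Real.sin_add, Real.sin_int_mul_pi, zero_mul, zero_add] at hone
      exact hone
    have hNm : (N:ℝ) * (M.M i j) = 2 * k := by
      have h3 : ((N:ℝ) * (M.M i j)) * θ = (2*(k:ℝ)) * θ := by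
        rw [mul_assoc, hmθ]
        linarith [hN]
      exact mul_right_cancel₀ hθpos.ne' h3
    rcases Int.even_or_odd N with ⟨q, hq⟩ | ⟨q, hq⟩
    · -- N = q + q
      have hk' : (q:ℝ) * (M.M i j) = k := by
        have : ((q:ℝ) + q) * (M.M i j) = 2 * k := by
          rw [← hNm, hq]
          push_cast
          ring
        linarith
      have hq1 : (1:ℝ) ≤ (q:ℝ) := by
        have hmpos : (0:ℝ) < (M.M i j : ℝ) := by positivity
        have hqpos : (0:ℝ) < (q:ℝ) := by
          nlinarith [hk', (by exact_mod_cast hk : (0:ℝ) < (k:ℝ))]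
        have : (0:ℤ) < q := by exact_mod_cast hqpos
        exact_mod_cast this
      have : (M.M i j : ℝ) ≤ (k : ℝ) := by
        have hmpos : (0:ℝ) < (M.M i j : ℝ) := by positivity
        nlinarith [hk']
      exact_mod_cast this
    · -- N odd: contradiction
      exfalso
      have : Real.cos ((N:ℝ) * Real.pi) = -1 := by
        rw [hq]
        push_cast
        rw [show ((2:ℝ)*q+1) * Real.pi = (q:ℝ)*(2*Real.pi) + Real.pi from by ring,
          Real.cos_add_pi, Real.cos_int_mul_two_pi]
      rw [this] at hcos
      nlinarith [hs]

end TitsAux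

namespace TitsAux

variable {B W : Type*} [Group W] {M : CoxeterMatrix B} (cs : CoxeterSystem M W)

local prefix:100 "σ" => cs.simple
local prefix:100 "π" => cs.wordProd
local prefix:100 "lis" => cs.leftInvSeq
local prefix:100 "ℓ" => cs.length

theorem altWord_take {S : Type*} (t s : S) (p k : ℕ) (h : p ≤ k) :
    (altWord t s k).take p = altWord t s p := by
  obtain ⟨q, rfl⟩ := Nat.exists_eq_add_of_le h
  rw [altWord_append]
  rw [List.take_left' (by simp)]

theorem altWord_getElem {S : Type*} (t s : S) (p k : ℕ) (h1 : p < k)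
    (h2 : p < (altWord t s k).length) :
    (altWord t s k)[p] = if Even p then t else s := by
  rw [← List.getD_eq_getElem _ t h2]
  exact altWord_getD t s t p k h1

theorem altWord_succ_append {S : Type*} (t s : S) (p : ℕ) :
    altWord t s (p + 1) = altWord t s p ++ [if Even p then t else s] := by
  rw [altWord_append]
  by_cases h : Even p <;> simp [h]

private theorem eraseIdx_append_right {S : Type*} (l₁ l₂ : List S) (p : ℕ) (h : l₁.length ≤ p) :
    (l₁ ++ l₂).eraseIdx p = l₁ ++ l₂.eraseIdx (p - l₁.length) := by
  rw [List.eraseIdx_eq_take_drop_succ, List.eraseIdx_eq_take_drop_succ,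
    List.take_append, List.drop_append,
    List.take_of_length_le (le_trans h (by omega)), List.drop_eq_nil_of_le (by omega)]
  rw [show p + 1 - l₁.length = (p - l₁.length) + 1 from by omega]
  simp

/-- An alternating prefix of a reduced word has length at most `M t s`. -/
theorem alt_prefix_le {t s : B} (hM : M.M t s ≠ 0) {k : ℕ} {rest : List B}
    (h : cs.IsReduced (altWord t s k ++ rest)) : k ≤ M.M t s := by
  by_contra hlt
  push_neg at hlt
  have h1 : cs.IsReduced (altWord t s k) := by
    have h2 := h.take k
    rwa [List.take_append, List.take_of_length_le (by simp), altWord_length,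
      Nat.sub_self, List.take_zero, List.append_nil] at h2
  rw [altWord_eq_reverse_alternatingWord, cs.isReduced_reverse_iff] at h1
  exact cs.not_isReduced_alternatingWord s t (by rwa [M.symmetric s t]) (by rwa [M.symmetric s t]) h1

/-- From an in-prefix exchange we get a dihedral relation. -/
theorem pow_eq_one_of_prods_eq {s t : B} {q : ℕ}
    (h : π (altWord s t q) = π (altWord t s q)) : (σ s * σ t) ^ q = 1 := by
  rcases Nat.even_or_odd q with ⟨e, he⟩ | ⟨e, he⟩
  · subst he
    rw [show e + e = 2 * e from by ring] at h ⊢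
    rw [prod_altWord_even, prod_altWord_even] at h
    rw [show 2 * e = e + e from by ring, pow_add]
    nth_rewrite 2 [h]
    rw [pow_swap_inv]
    simp
  · subst he
    rw [prod_altWord_odd, prod_altWord_odd] at h
    rw [pow_swap_inv cs s t e] at h
    have h2 : (σ s * σ t) ^ e * ((σ s * σ t) ^ e * σ s) = σ t := by
      rw [h]
      group
    rw [show 2*e+1 = e+(e+1) from by ring, pow_add, pow_succ]
    rw [show (σ s * σ t) ^ e * ((σ s * σ t) ^ e * (σ s * σ t))
      = ((σ s * σ t) ^ e * ((σ s * σ t) ^ e * σ s)) * σ t from by group]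
    rw [h2]
    exact cs.simple_mul_simple_self t

/-- Claim C: a reduced word with an alternating prefix and two left descents can be
modified (keeping the product) so that the alternating prefix has full length `M s t`. -/
theorem claimC (fuel : ℕ) : ∀ (k : ℕ) (t s : B) (rest : List B), 1 ≤ k → s ≠ t →
    cs.IsReduced (altWord t s k ++ rest) →
    ℓ (σ s * π (altWord t s k ++ rest)) < ℓ (π (altWord t s k ++ rest)) →
    ℓ (σ t * π (altWord t s k ++ rest)) < ℓ (π (altWord t s k ++ rest)) →
    k + fuel = (altWord t s k ++ rest).length + 1 →
    M.M s t ≠ 0 ∧ ∃ (x y : B) (rest' : List B), ((x = s ∧ y = t) ∨ (x = t ∧ y = s)) ∧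
      cs.IsReduced (altWord x y (M.M s t) ++ rest') ∧
      π (altWord x y (M.M s t) ++ rest') = π (altWord t s k ++ rest) := by
  induction fuel with
  | zero =>
    intro k t s rest hk hst hred hds hdt hfuel
    exfalso
    simp only [List.length_append, altWord_length] at hfuel
    omega
  | succ fuel ih =>
    intro k t s rest hk hst hred hds hdt hfuel
    obtain ⟨p, hp, hgd, herase⟩ := exchange cs hred hds
    by_cases hpk : p < k
    · -- exchange inside the prefix: we derive k = M s t and stop
      have htake : (altWord t s k ++ rest).take p = altWord t s p := by
        rw [List.take_append,
          show p - (altWord t s k).length = 0 from by simp; omega, List.take_zero,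
          List.append_nil, altWord_take t s p k (le_of_lt hpk)]
      have hget : (altWord t s k ++ rest)[p]? = some (if Even p then t else s) := by
        rw [List.getElem?_append_left (by simp; omega),
          List.getElem?_eq_getElem (by simp; omega),
          altWord_getElem t s p k hpk (by simp; omega)]
      have hconj : σ s = π (altWord t s p) * σ (if Even p then t else s)
          * (π (altWord t s p))⁻¹ := by
        rw [← hgd, cs.getD_leftInvSeq, htake, hget]
        rfl
      have hprods : π (altWord s t (p+1)) = π (altWord t s (p+1)) := by
        have h1 : π (altWord s t (p+1)) = σ s * π (altWord t s p) := by
          rw [show altWord s t (p+1) = s :: altWord t s p from rfl, cs.wordProd_cons]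
        have h2 : π (altWord t s (p+1)) = π (altWord t s p) * σ (if Even p then t else s) := by
          rw [altWord_succ_append, cs.wordProd_append]
          by_cases h : Even p <;> simp [h]
        rw [h1, h2, hconj]
        group
      have hpow := pow_eq_one_of_prods_eq cs hprods
      obtain ⟨hM0, hMle⟩ := order_exact cs hst (Nat.succ_pos p) hpow
      have hkM : k ≤ M.M t s := alt_prefix_le cs (by rwa [M.symmetric t s]) hred
      rw [M.symmetric t s] at hkM
      have hkeq : k = M.M s t := by omega
      refine ⟨hM0, t, s, rest, Or.inr ⟨rfl, rfl⟩, ?_, ?_⟩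
      · rwa [← hkeq]
      · rw [← hkeq]
    · -- exchange in the tail: grow the prefix
      push_neg at hpk
      have hplen : p - k < rest.length := by
        simp only [List.length_append, altWord_length] at hp
        omega
      have herase2 : (altWord t s k ++ rest).eraseIdx p
          = altWord t s k ++ rest.eraseIdx (p - k) := by
        rw [eraseIdx_append_right _ _ p (by simp; omega)]
        simp
      have hcnew : altWord s t (k+1) ++ rest.eraseIdx (p - k)
          = s :: ((altWord t s k ++ rest).eraseIdx p) := by
        rw [herase2, show altWord s t (k+1) = s :: altWord t s k from rfl]
        simp
      have hπnew : π (altWord s t (k+1) ++ rest.eraseIdx (p - k))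
          = π (altWord t s k ++ rest) := by
        rw [hcnew, cs.wordProd_cons, herase, ← mul_assoc, cs.simple_mul_simple_self, one_mul]
      have hlen : (altWord s t (k+1) ++ rest.eraseIdx (p - k)).length
          = (altWord t s k ++ rest).length := by
        simp only [List.length_append, altWord_length, List.length_eraseIdx, if_pos hplen]
        simp only [List.length_append, altWord_length] at hp
        omega
      have hrednew : cs.IsReduced (altWord s t (k+1) ++ rest.eraseIdx (p - k)) := by
        unfold CoxeterSystem.IsReduced at *
        rw [hπnew, hlen]
        exact hred
      have hdsnew : ℓ (σ t * π (altWord s t (k+1) ++ rest.eraseIdx (p - k)))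
          < ℓ (π (altWord s t (k+1) ++ rest.eraseIdx (p - k))) := by rwa [hπnew]
      have hdtnew : ℓ (σ s * π (altWord s t (k+1) ++ rest.eraseIdx (p - k)))
          < ℓ (π (altWord s t (k+1) ++ rest.eraseIdx (p - k))) := by rwa [hπnew]
      have hfuelnew : (k+1) + fuel = (altWord s t (k+1) ++ rest.eraseIdx (p - k)).length + 1 := by
        rw [hlen]
        omega
      obtain ⟨hM0, x, y, rest', hxy, hred', hπ'⟩ :=
        ih (k+1) s t (rest.eraseIdx (p - k)) (by omega) (Ne.symm hst) hrednew hdsnew hdtnew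
          hfuelnew
      rw [M.symmetric t s] at hM0 hred' hπ'
      refine ⟨hM0, x, y, rest', ?_, hred', by rw [hπ', hπnew]⟩
      tauto

end TitsAux

namespace TitsAux

open Relation

variable {B W : Type*} [Group W] {M : CoxeterMatrix B} (cs : CoxeterSystem M W)

local prefix:100 "σ" => cs.simple
local prefix:100 "π" => cs.wordProd
local prefix:100 "ℓ" => cs.length

theorem braidMove_cons {i : B} {a b : List B} (h : BraidMove M a b) :
    BraidMove M (i :: a) (i :: b) := by
  obtain ⟨v, u, s, r, hM, h1, h2⟩ := h
  exact ⟨i :: v, u, s, r, hM, by simp [h1], by simp [h2]⟩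

theorem braidChain_cons {i : B} {a b : List B} (h : ReflTransGen (BraidMove M) a b) :
    ReflTransGen (BraidMove M) (i :: a) (i :: b) :=
  ReflTransGen.lift (fun x => i :: x) (fun _ _ h => braidMove_cons h) _ _ h

theorem braidMove_wordProd {a b : List B} (h : BraidMove M a b) : π a = π b := by
  obtain ⟨v, u, s, r, hM, h1, h2⟩ := h
  subst h1 h2
  rw [cs.wordProd_append, cs.wordProd_append, cs.wordProd_append, cs.wordProd_append,
    prod_altWord_braid cs s r, M.symmetric s r]

theorem braidMove_length {a b : List B} (h : BraidMove M a b) : a.length = b.length := by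
  obtain ⟨v, u, s, r, hM, h1, h2⟩ := h
  subst h1 h2
  simp [M.symmetric s r]

theorem tail_reduced {i : B} {v : List B} (h : cs.IsReduced (i :: v)) :
    cs.IsReduced v ∧ π v = σ i * π (i :: v) ∧ ℓ (σ i * π (i :: v)) < ℓ (π (i :: v)) := by
  have h1 : cs.IsReduced v := by
    have := h.drop 1
    simpa using this
  have h2 : π v = σ i * π (i :: v) := by
    rw [cs.wordProd_cons, ← mul_assoc, cs.simple_mul_simple_self, one_mul]
  refine ⟨h1, h2, ?_⟩
  rw [← h2, h1, h]
  simp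

/-- Matsumoto's theorem: two reduced words for the same element are connected by
braid moves. -/
theorem matsumoto (n : ℕ) : ∀ (ω₁ ω₂ : List B), cs.IsReduced ω₁ → cs.IsReduced ω₂ →
    π ω₁ = π ω₂ → ω₁.length = n → ReflTransGen (BraidMove M) ω₁ ω₂ := by
  induction n using Nat.strong_induction_on with
  | _ n ihn =>
  intro ω₁ ω₂ h1 h2 hπ hlen
  have hlen2 : ω₂.length = n := by
    rw [← h2, ← hπ, h1, hlen]
  cases ω₁ with
  | nil =>
    have : ω₂ = [] := List.eq_nil_of_length_eq_zero (by rw [hlen2, ← hlen]; rfl)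
    rw [this]
  | cons i v₁ =>
    cases ω₂ with
    | nil =>
      exfalso
      rw [List.length_cons] at hlen
      rw [List.length_nil] at hlen2
      omega
    | cons j v₂ =>
      obtain ⟨hv₁red, hv₁π, hv₁d⟩ := tail_reduced cs h1
      obtain ⟨hv₂red, hv₂π, hv₂d⟩ := tail_reduced cs h2
      have hlen1 : v₁.length + 1 = n := by simpa using hlen
      have hlen2' : v₂.length = v₁.length := by
        rw [List.length_cons] at hlen2
        omega
      rcases eq_or_ne i j with rfl | hij
      · -- same head
        have hchain := ihn v₁.length (by omega) v₁ v₂ hv₁red hv₂red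
          (by rw [hv₁π, hv₂π, hπ]) rfl
        exact braidChain_cons hchain
      · -- different heads: use claimC
        have hd2 : ℓ (σ j * π (i :: v₁)) < ℓ (π (i :: v₁)) := by
          rw [hπ]
          exact hv₂d
        have hredalt : cs.IsReduced (altWord i j 1 ++ v₁) := h1
        have hfuel : 1 + (v₁.length + 1) = (altWord i j 1 ++ v₁).length + 1 := by
          simp
          omega
        obtain ⟨hM0, x, y, rest', hxy, hred', hπ'⟩ :=
          claimC cs (v₁.length + 1) 1 i j v₁ le_rfl (Ne.symm hij) hredalt hd2 hv₁d hfuel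
        set m := M.M j i with hm
        have hm1 : 1 ≤ m := Nat.pos_of_ne_zero hM0
        have hπd : π (altWord x y m ++ rest') = π (i :: v₁) := hπ'
        have hlend : (altWord x y m ++ rest').length = n := by
          rw [← hred', hπd, h1, hlen]
        have hMij : M.M i j ≠ 0 := by rwa [M.symmetric i j]
        have hMij' : M.M i j = m := by rw [M.symmetric i j]
        -- the two flipped words
        have hbm : BraidMove M (altWord i j m ++ rest') (altWord j i m ++ rest') :=
          ⟨[], rest', i, j, hMij, by rw [hMij']; rfl, by rw [hMij']; rfl⟩
        have hbm' : BraidMove M (altWord j i m ++ rest') (altWord i j m ++ rest') :=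
          ⟨[], rest', j, i, hM0, by rw [← hm]; rfl, by rw [← hm]; rfl⟩
        have hsplit_ji : altWord j i m ++ rest' = j :: (altWord i j (m-1) ++ rest') := by
          rw [show m = (m-1) + 1 from by omega]
          rfl
        have hsplit_ij : altWord i j m ++ rest' = i :: (altWord j i (m-1) ++ rest') := by
          rw [show m = (m-1) + 1 from by omega]
          rfl
        have hππ : π (altWord i j m ++ rest') = π (altWord j i m ++ rest') :=
          braidMove_wordProd cs hbm
        -- both flipped words are reduced words for π (i :: v₁)
        have hπi : π (altWord i j m ++ rest') = π (i :: v₁) := by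
          rcases hxy with ⟨rfl, rfl⟩ | ⟨rfl, rfl⟩
          · rw [hππ]; exact hπd
          · exact hπd
        have hπj : π (altWord j i m ++ rest') = π (i :: v₁) := by
          rw [← hππ]; exact hπi
        have hleni : (altWord i j m ++ rest').length = n := by
          simp only [List.length_append, altWord_length]
          simpa using hlend
        have hlenj : (altWord j i m ++ rest').length = n := by
          simp only [List.length_append, altWord_length]
          simpa using hlend
        have h1' : ℓ (π (i :: v₁)) = (i :: v₁).length := h1
        have hredi : cs.IsReduced (altWord i j m ++ rest') := by
          show ℓ (π (altWord i j m ++ rest')) = _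
          rw [hπi, h1', hlen, hleni]
        have hredj : cs.IsReduced (altWord j i m ++ rest') := by
          show ℓ (π (altWord j i m ++ rest')) = _
          rw [hπj, h1', hlen, hlenj]
        -- chain ω₁ ↝ (altWord i j m ++ rest')
        rw [hsplit_ij] at hredi hπi hleni
        obtain ⟨htri, htπi, _⟩ := tail_reduced cs hredi
        have hc1 : ReflTransGen (BraidMove M) (i :: v₁) (i :: (altWord j i (m-1) ++ rest')) := by
          apply braidChain_cons
          refine ihn v₁.length (by omega) _ _ hv₁red htri ?_ rfl
          rw [hv₁π, htπi, hπi]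
        -- chain (altWord j i m ++ rest') ↝ ω₂
        rw [hsplit_ji] at hredj hπj hlenj
        obtain ⟨htrj, htπj, _⟩ := tail_reduced cs hredj
        have hc2 : ReflTransGen (BraidMove M) (j :: (altWord i j (m-1) ++ rest')) (j :: v₂) := by
          apply braidChain_cons
          refine ihn v₁.length (by omega) _ _ htrj hv₂red ?_ ?_
          · rw [htπj, hv₂π, hπj, hπ]
          · rw [List.length_cons] at hlenj
            omega
        refine hc1.trans (ReflTransGen.trans ?_ hc2)
        rw [← hsplit_ij, ← hsplit_ji]
        exact ReflTransGen.single hbm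

/-- Any reduced word can be braid-moved to start with any given left descent. -/
theorem descent_to_head {ω : List B} (hred : cs.IsReduced ω) {i : B}
    (hd : ℓ (σ i * π ω) < ℓ (π ω)) :
    ∃ v, ReflTransGen (BraidMove M) ω (i :: v) ∧ v.length + 1 = ω.length := by
  obtain ⟨ω₀, hω₀red, hω₀⟩ := cs.exists_reduced_word' (σ i * π ω)
  have hπ : π (i :: ω₀) = π ω := by
    rw [cs.wordProd_cons, ← hω₀, ← mul_assoc, cs.simple_mul_simple_self, one_mul]
  have hlen : ω₀.length + 1 = ω.length := by
    have ha : ℓ (σ i * π ω) + 1 = ℓ (π ω) := length_simple_mul_of_descent cs hd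
    have hb : ℓ (π ω) = ω.length := hred
    have hc : ℓ (π ω₀) = ω₀.length := hω₀red
    rw [← hω₀] at hc
    omega
  have hred2 : cs.IsReduced (i :: ω₀) := by
    show ℓ (π (i :: ω₀)) = _
    rw [hπ, hred, List.length_cons]
    omega
  exact ⟨ω₀, matsumoto cs ω.length ω (i :: ω₀) hred hred2 hπ.symm rfl, hlen⟩

theorem mmove_append {a b : List B} (l r : List B) (h : MMove M a b) :
    MMove M (l ++ a ++ r) (l ++ b ++ r) := by
  rcases h with ⟨v, u, s, h1, h2⟩ | ⟨v, u, s, t, hM, h1, h2⟩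
  · left
    exact ⟨l ++ v, u ++ r, s, by simp [h1], by simp [h2]⟩
  · right
    exact ⟨l ++ v, u ++ r, s, t, hM, by simp [h1], by simp [h2]⟩

theorem mmove_cons {i : B} {a b : List B} (h : MMove M a b) : MMove M (i :: a) (i :: b) := by
  have := mmove_append (M := M) [i] [] h
  simpa using this

theorem mmove_wordProd {a b : List B} (h : MMove M a b) : π a = π b := by
  rcases h with ⟨v, u, s, h1, h2⟩ | hb
  · subst h1 h2
    rw [cs.wordProd_append, cs.wordProd_append, cs.wordProd_append,
      show π [s, s] = 1 from by
        rw [show ([s, s] : List B) = [s] ++ [s] from rfl, cs.wordProd_append]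
        simp [cs.simple_mul_simple_self]]
    simp
  · exact braidMove_wordProd cs hb

theorem mchain_wordProd {a b : List B} (h : ReflTransGen (MMove M) a b) : π a = π b := by
  induction h with
  | refl => rfl
  | tail _ hstep ih => rw [ih, mmove_wordProd cs hstep]

theorem not_reduced_shorten : ∀ (ω : List B), ¬ cs.IsReduced ω →
    ∃ ω', ReflTransGen (MMove M) ω ω' ∧ ω'.length < ω.length := by
  intro ω
  induction ω with
  | nil =>
    intro h
    exact absurd (by simp [CoxeterSystem.IsReduced]) h
  | cons i v ihv =>
    intro h
    by_cases hv : cs.IsReduced v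
    · have hd : ℓ (σ i * π v) < ℓ (π v) := by
        rcases cs.length_simple_mul (π v) i with h1 | h1
        · exfalso
          apply h
          unfold CoxeterSystem.IsReduced at *
          rw [cs.wordProd_cons, h1, hv]
          simp
        · omega
      obtain ⟨v₂, hchain, hlen⟩ := descent_to_head cs hv hd
      have hchainM : ReflTransGen (MMove M) (i :: v) (i :: i :: v₂) :=
        ReflTransGen.lift (fun x => i :: x)
          (fun a b hab => mmove_cons (Or.inr hab)) _ _ hchain
      have hnil : MMove M (i :: i :: v₂) v₂ := Or.inl ⟨[], v₂, i, rfl, rfl⟩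
      refine ⟨v₂, hchainM.trans (ReflTransGen.single hnil), ?_⟩
      simp only [List.length_cons]
      omega
    · obtain ⟨v', hchain, hlen⟩ := ihv hv
      refine ⟨i :: v', ?_, by simpa using Nat.succ_lt_succ hlen⟩
      exact ReflTransGen.lift (fun x => i :: x)
        (fun a b hab => mmove_cons hab) _ _ hchain

end TitsAux


/-- Tits' solution to the word problem, part 1: a word in `S*` is reduced
for `(W,S)` if and only if it is `M`-reduced. -/
theorem isReduced_iff_mReduced {B : Type*} {W : Type*} [Group W]
    (M : CoxeterMatrix B) (cs : CoxeterSystem M W) (w : List B) :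
    cs.IsReduced w ↔ MReduced M w := by
  constructor
  · intro hred w' hchain
    have hπ : cs.wordProd w = cs.wordProd w' := TitsAux.mchain_wordProd cs hchain
    calc w.length = cs.length (cs.wordProd w) := hred.symm
      _ = cs.length (cs.wordProd w') := by rw [hπ]
      _ ≤ w'.length := cs.length_wordProd_le w'
  · intro hmr
    by_contra hnr
    obtain ⟨w', hchain, hlt⟩ := TitsAux.not_reduced_shorten cs w hnr
    have := hmr w' hchain
    omega
end

section
/- If (M,X,Y,σ) is a mutable tuple, then (μ(M,X,Y,σ), X, Y, σ⁻¹) is also a mutable tuple and μ(μ(M,X,Y,σ), X, Y, σ⁻¹) = M; i.e. mutation is an involution on mutable tuples. -/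
/-- A mutable tuple: `M` is a Coxeter matrix over `S`, `S = X ⊔ Y ⊔ T ⊔ Z` is a
partition, and `σ` is a permutation of `S` supported on `X` which is a
Coxeter-automorphism of the subsystem `(W_X, X)`, such that (i) `m_{t,y} = ∞` for
`t ∈ T`, `y ∈ Y`; (ii) `m_{z,y} < ∞` for `z ∈ Z`, `y ∈ Y`; (iii) `m_{z,σx} = m_{z,x}`
for `z ∈ Z`, `x ∈ X`. (The entry `0` plays the role of `∞`.) -/
def IsMutable {S : Type*} (M : CoxeterMatrix S) (X Y T Z : Set S) (σ : Equiv.Perm S) :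
    Prop :=
  Disjoint X Y ∧ Disjoint X T ∧ Disjoint X Z ∧ Disjoint Y T ∧ Disjoint Y Z ∧
    Disjoint T Z ∧ X ∪ Y ∪ T ∪ Z = Set.univ ∧
  (∀ x ∈ X, σ x ∈ X) ∧ (∀ s ∉ X, σ s = s) ∧
  (∀ x ∈ X, ∀ x' ∈ X, M (σ x) (σ x') = M x x') ∧
  (∀ t ∈ T, ∀ y ∈ Y, M t y = 0) ∧
  (∀ z ∈ Z, ∀ y ∈ Y, M z y ≠ 0) ∧
  (∀ z ∈ Z, ∀ x ∈ X, M z (σ x) = M z x)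

open scoped Classical in
/-- The entries of the mutation `μ(M,X,Y,σ)` of a Coxeter matrix `M`:
`n_{r,s} = m_{σ(r),σ(s)}` if `r,s ∈ X`; `n_{r,s} = m_{σ(r),s}` if `r ∈ X`, `s ∈ Y`
(extended symmetrically); and `n_{r,s} = m_{r,s}` otherwise. -/
noncomputable def mutEntry {S : Type*} (M : CoxeterMatrix S) (X Y : Set S)
    (σ : Equiv.Perm S) (r s : S) : ℕ :=
  if r ∈ X ∧ s ∈ X then M (σ r) (σ s)
  else if r ∈ X ∧ s ∈ Y then M (σ r) s
  else if r ∈ Y ∧ s ∈ X then M r (σ s)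
  else M r s


theorem perm_apply_inv_self' {S : Type*} (σ : Equiv.Perm S) (x : S) : σ (σ⁻¹ x) = x :=
  (Equiv.eq_symm_apply σ).mp rfl

theorem perm_inv_apply_self' {S : Type*} (σ : Equiv.Perm S) (x : S) : σ⁻¹ (σ x) = x :=
  Equiv.Perm.inv_eq_iff_eq.mpr rfl

/-- if `(M,X,Y,σ)` is a mutable tuple, then `(μ(M,X,Y,σ), X, Y, σ⁻¹)` is
also a mutable tuple and `μ(μ(M,X,Y,σ), X, Y, σ⁻¹) = M`: mutation is an involution on
mutable tuples. -/
theorem mutation_involutive {S : Type*} (M : CoxeterMatrix S) (X Y T Z : Set S)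
    (σ : Equiv.Perm S) (hmut : IsMutable M X Y T Z σ)
    (N : CoxeterMatrix S) (hN : ∀ r s, N r s = mutEntry M X Y σ r s) :
    IsMutable N X Y T Z σ⁻¹ ∧ ∀ r s, mutEntry N X Y σ⁻¹ r s = M r s := by
  obtain ⟨hXY, hXT, hXZ, hYT, hYZ, hTZ, hcov, hσX, hσfix, hσM, hTY, hZY, hZX⟩ := hmut
  have hinvX : ∀ x ∈ X, σ⁻¹ x ∈ X := by
    intro x hx
    by_contra h
    have h1 := hσfix _ h
    rw [perm_apply_inv_self'] at h1
    exact h (h1 ▸ hx)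
  have hinvfix : ∀ s ∉ X, σ⁻¹ s = s := by
    intro s hs
    have h1 := hσfix s hs
    nth_rewrite 1 [← h1]
    exact perm_inv_apply_self' σ s
  have hNX : ∀ x ∈ X, ∀ x' ∈ X, N x x' = M (σ x) (σ x') := by
    intro x hx x' hx'
    rw [hN]
    unfold mutEntry
    rw [if_pos ⟨hx, hx'⟩]
  have hNXY : ∀ x ∈ X, ∀ y ∈ Y, N x y = M (σ x) y := by
    intro x hx y hy
    have hyX : y ∉ X := hXY.symm.subset_compl_right hy
    rw [hN]
    unfold mutEntry
    rw [if_neg (fun h => hyX h.2), if_pos ⟨hx, hy⟩]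
  have hNYX : ∀ y ∈ Y, ∀ x ∈ X, N y x = M y (σ x) := by
    intro y hy x hx
    have hyX : y ∉ X := hXY.symm.subset_compl_right hy
    rw [hN]
    unfold mutEntry
    rw [if_neg (fun h => hyX h.1), if_neg (fun h => hyX h.1), if_pos ⟨hy, hx⟩]
  have hNother : ∀ r s, r ∉ X → r ∉ Y → N r s = M r s := by
    intro r s hr hr'
    rw [hN]
    unfold mutEntry
    rw [if_neg (fun h => hr h.1), if_neg (fun h => hr h.1), if_neg (fun h => hr' h.1)]
  have hNother' : ∀ r s, r ∉ X → s ∉ X → s ∉ Y → N r s = M r s := by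
    intro r s hr hs hs'
    rw [hN]
    unfold mutEntry
    rw [if_neg (fun h => hs h.2), if_neg (fun h => hs' h.2), if_neg (fun h => hs h.2)]
  refine ⟨⟨hXY, hXT, hXZ, hYT, hYZ, hTZ, hcov, hinvX, hinvfix, ?_, ?_, ?_, ?_⟩, ?_⟩
  · intro x hx x' hx'
    rw [hNX _ (hinvX _ hx) _ (hinvX _ hx'), hNX _ hx _ hx',
      perm_apply_inv_self', perm_apply_inv_self', hσM _ hx _ hx']
  · intro t ht y hy
    have htX : t ∉ X := hXT.symm.subset_compl_right ht
    have htY : t ∉ Y := hYT.symm.subset_compl_right ht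
    rw [hNother _ _ htX htY]
    exact hTY _ ht _ hy
  · intro z hz y hy
    have hzX : z ∉ X := hXZ.symm.subset_compl_right hz
    have hzY : z ∉ Y := hYZ.symm.subset_compl_right hz
    rw [hNother _ _ hzX hzY]
    exact hZY _ hz _ hy
  · intro z hz x hx
    have hzX : z ∉ X := hXZ.symm.subset_compl_right hz
    have hzY : z ∉ Y := hYZ.symm.subset_compl_right hz
    rw [hNother _ _ hzX hzY, hNother _ _ hzX hzY]
    have h1 := hZX _ hz _ (hinvX _ hx)
    rw [perm_apply_inv_self'] at h1
    exact h1.symm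
  · intro r s
    by_cases h1 : r ∈ X ∧ s ∈ X
    · obtain ⟨hr, hs⟩ := h1
      unfold mutEntry
      rw [if_pos ⟨hr, hs⟩, hNX _ (hinvX _ hr) _ (hinvX _ hs),
        perm_apply_inv_self', perm_apply_inv_self']
    · by_cases h2 : r ∈ X ∧ s ∈ Y
      · obtain ⟨hr, hs⟩ := h2
        unfold mutEntry
        rw [if_neg h1, if_pos ⟨hr, hs⟩, hNXY _ (hinvX _ hr) _ hs,
          perm_apply_inv_self']
      · by_cases h3 : r ∈ Y ∧ s ∈ X
        · obtain ⟨hr, hs⟩ := h3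
          unfold mutEntry
          rw [if_neg h1, if_neg h2, if_pos ⟨hr, hs⟩, hNYX _ hr _ (hinvX _ hs),
            perm_apply_inv_self']
        · unfold mutEntry
          rw [if_neg h1, if_neg h2, if_neg h3, hN]
          unfold mutEntry
          rw [if_neg h1, if_neg h2, if_neg h3]
end
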